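/- Let A = (A_1, ..., A_d) and B = (B_1, ..., B_d) be commuting d-tuples of contractions on Hilbert spaces H and K respectively. Suppose there exists a unital multiplicative linear functional χ on the unital Banach algebra generated by B_1, ..., B_d with χ(B_j) = 1 for all j. If the tuple A ⊗ B = (A_1 ⊗ B_1, ..., A_d ⊗ B_d) on H ⊗ K satisfies von Neumann's inequality (i.e., ‖p(A⊗B)‖ ≤ sup_{z ∈ D^d} |p(z)| for all complex polynomials p in d variables), then A satisfies von Neumann's inequality. -/

import Mathlib

set_option maxHeartbeats 4000000
set_option synthInstance.maxHeartbeats 1000000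


/-- `T^α = T_1^{α_1} ⋯ T_d^{α_d}` for a (commuting) tuple in a possibly noncommutative ring. -/
noncomputable def tuplePow {d : ℕ} {R : Type*} [Monoid R] (T : Fin d → R) (α : Fin d →₀ ℕ) : R :=
  (List.ofFn fun j => T j ^ α j).prod

/-- Evaluation `p(T) = Σ_α a_α T^α` of a polynomial on a tuple of operators. -/
noncomputable def polyEval {d : ℕ} {R : Type*} [Ring R] [Algebra ℂ R] (T : Fin d → R)
    (p : MvPolynomial (Fin d) ℂ) : R :=
  (AddMonoidAlgebra.coeff p).sum fun α a => a • tuplePow T α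

/-- `sup_{z ∈ 𝔻^d} |p(z)|`, the supremum of `|p|` over the open unit polydisc. -/
noncomputable def polySup {d : ℕ} (p : MvPolynomial (Fin d) ℂ) : ℝ :=
  ⨆ z : {z : Fin d → ℂ // ∀ i, ‖z i‖ < 1}, ‖MvPolynomial.eval z.1 p‖

section Aux

variable {H K E : Type*}
  [NormedAddCommGroup H] [InnerProductSpace ℂ H]
  [NormedAddCommGroup K] [InnerProductSpace ℂ K]
  [NormedAddCommGroup E] [InnerProductSpace ℂ E]

lemma aux_t_norm (t : H →ₗ[ℂ] K →ₗ[ℂ] E)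
    (ht : ∀ (x x' : H) (y y' : K),
      (inner ℂ (t x y) (t x' y') : ℂ) = (inner ℂ x x' : ℂ) * (inner ℂ y y' : ℂ))
    (x : H) (y : K) : ‖t x y‖ = ‖x‖ * ‖y‖ := by
  have h1 := ht x x y y
  rw [inner_self_eq_norm_sq_to_K, inner_self_eq_norm_sq_to_K, inner_self_eq_norm_sq_to_K] at h1
  have hr : ‖t x y‖ ^ 2 = (‖x‖ * ‖y‖) ^ 2 := by
    rw [mul_pow]
    exact_mod_cast h1
  have := congrArg Real.sqrt hr
  rwa [Real.sqrt_sq (norm_nonneg _),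
    Real.sqrt_sq (mul_nonneg (norm_nonneg _) (norm_nonneg _))] at this

lemma aux_pow_norm_le (T : H →L[ℂ] H) (hT : ‖T‖ ≤ 1) (n : ℕ) : ‖T ^ n‖ ≤ 1 := by
  induction n with
  | zero => simpa [ContinuousLinearMap.one_def] using ContinuousLinearMap.norm_id_le
  | succ n ih =>
    rw [pow_succ]
    calc ‖T ^ n * T‖ ≤ ‖T ^ n‖ * ‖T‖ := norm_mul_le _ _
    _ ≤ 1 := by nlinarith [norm_nonneg (T ^ n), norm_nonneg T]

lemma aux_listProd_norm_le {d : ℕ} (A : Fin d → (H →L[ℂ] H)) (hA : ∀ j, ‖A j‖ ≤ 1)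
    (α : Fin d →₀ ℕ) (l : List (Fin d)) : ‖(l.map fun j => A j ^ α j).prod‖ ≤ 1 := by
  induction l with
  | nil => simpa [ContinuousLinearMap.one_def] using ContinuousLinearMap.norm_id_le
  | cons j l ih =>
    rw [List.map_cons, List.prod_cons]
    calc ‖A j ^ α j * (l.map fun j => A j ^ α j).prod‖
        ≤ ‖A j ^ α j‖ * ‖(l.map fun j => A j ^ α j).prod‖ := norm_mul_le _ _
    _ ≤ 1 := by nlinarith [aux_pow_norm_le (A j) (hA j) (α j),
        norm_nonneg (A j ^ α j), norm_nonneg ((l.map fun j => A j ^ α j).prod)]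

lemma aux_tuplePow_norm_le {d : ℕ} (A : Fin d → (H →L[ℂ] H)) (hA : ∀ j, ‖A j‖ ≤ 1)
    (α : Fin d →₀ ℕ) : ‖tuplePow A α‖ ≤ 1 := by
  unfold tuplePow
  rw [List.ofFn_eq_map]
  exact aux_listProd_norm_le A hA α _

lemma aux_tuplePow_approx {d : ℕ} (B : Fin d → (K →L[ℂ] K)) (hB : ∀ j, ‖B j‖ ≤ 1)
    (y : K) {ε : ℝ} (hε : 0 ≤ ε) (hy : ∀ j, ‖B j y - y‖ ≤ ε) (α : Fin d →₀ ℕ) :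
    ‖tuplePow B α y - y‖ ≤ (∑ j, (α j : ℝ)) * ε := by
  have hpow : ∀ (j : Fin d) (n : ℕ), ‖(B j ^ n) y - y‖ ≤ (n : ℝ) * ε := by
    intro j n
    induction n with
    | zero => simp
    | succ n ih =>
      have hsplit : (B j ^ (n + 1)) y - y
          = B j ((B j ^ n) y - y) + (B j y - y) := by
        simp only [pow_succ', ContinuousLinearMap.mul_apply, map_sub]
        abel
      rw [hsplit]
      have h1 : ‖B j ((B j ^ n) y - y)‖ ≤ (n : ℝ) * ε := by
        calc ‖B j ((B j ^ n) y - y)‖ ≤ ‖B j‖ * ‖(B j ^ n) y - y‖ :=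
          ContinuousLinearMap.le_opNorm _ _
        _ ≤ 1 * ((n : ℝ) * ε) := by
          refine mul_le_mul (hB j) ih (norm_nonneg _) zero_le_one
        _ = (n : ℝ) * ε := one_mul _
      calc ‖B j ((B j ^ n) y - y) + (B j y - y)‖
          ≤ ‖B j ((B j ^ n) y - y)‖ + ‖B j y - y‖ := norm_add_le _ _
      _ ≤ (n : ℝ) * ε + ε := add_le_add h1 (hy j)
      _ = ((n + 1 : ℕ) : ℝ) * ε := by push_cast; ring
  suffices h : ∀ l : List (Fin d),
      ‖((l.map fun j => B j ^ α j).prod) y - y‖ ≤ ((l.map fun j => (α j : ℝ)).sum) * ε by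
    have h2 := h (List.finRange d)
    unfold tuplePow
    rw [List.ofFn_eq_map, Fin.sum_univ_def]
    exact h2
  intro l
  induction l with
  | nil => simp
  | cons j l ih =>
    rw [List.map_cons, List.prod_cons, List.map_cons, List.sum_cons]
    have hsplit : (B j ^ α j * (l.map fun j => B j ^ α j).prod) y - y
        = (B j ^ α j) ((l.map fun j => B j ^ α j).prod y - y) + ((B j ^ α j) y - y) := by
      simp only [ContinuousLinearMap.mul_apply, map_sub]
      abel
    rw [hsplit]
    have h1 : ‖(B j ^ α j) ((l.map fun j => B j ^ α j).prod y - y)‖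
        ≤ ((l.map fun j => (α j : ℝ)).sum) * ε := by
      calc ‖(B j ^ α j) ((l.map fun j => B j ^ α j).prod y - y)‖
          ≤ ‖B j ^ α j‖ * ‖(l.map fun j => B j ^ α j).prod y - y‖ :=
        ContinuousLinearMap.le_opNorm _ _
      _ ≤ 1 * (((l.map fun j => (α j : ℝ)).sum) * ε) := by
        refine mul_le_mul (aux_pow_norm_le (B j) (hB j) (α j)) ih (norm_nonneg _) zero_le_one
      _ = ((l.map fun j => (α j : ℝ)).sum) * ε := one_mul _
    calc ‖(B j ^ α j) ((l.map fun j => B j ^ α j).prod y - y) + ((B j ^ α j) y - y)‖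
        ≤ ‖(B j ^ α j) ((l.map fun j => B j ^ α j).prod y - y)‖ + ‖(B j ^ α j) y - y‖ :=
        norm_add_le _ _
    _ ≤ ((l.map fun j => (α j : ℝ)).sum) * ε + (α j : ℝ) * ε := add_le_add h1 (hpow j (α j))
    _ = ((α j : ℝ) + (l.map fun j => (α j : ℝ)).sum) * ε := by ring

lemma aux_tuplePow_tensor {d : ℕ}
    (A : Fin d → (H →L[ℂ] H)) (B : Fin d → (K →L[ℂ] K)) (AB : Fin d → (E →L[ℂ] E))
    (t : H →ₗ[ℂ] K →ₗ[ℂ] E)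
    (hAB : ∀ j x y, AB j (t x y) = t (A j x) (B j y)) (α : Fin d →₀ ℕ) (x : H) (y : K) :
    tuplePow AB α (t x y) = t (tuplePow A α x) (tuplePow B α y) := by
  have hpow : ∀ (j : Fin d) (n : ℕ) (x : H) (y : K),
      (AB j ^ n) (t x y) = t ((A j ^ n) x) ((B j ^ n) y) := by
    intro j n
    induction n with
    | zero => intro x y; simp
    | succ n ih =>
      intro x y
      simp only [pow_succ', ContinuousLinearMap.mul_apply]
      rw [ih, hAB]
  suffices h : ∀ l : List (Fin d), ∀ x y,
      ((l.map fun j => AB j ^ α j).prod) (t x y)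
        = t (((l.map fun j => A j ^ α j).prod) x) (((l.map fun j => B j ^ α j).prod) y) by
    have h2 := h (List.finRange d) x y
    unfold tuplePow
    rw [List.ofFn_eq_map, List.ofFn_eq_map, List.ofFn_eq_map]
    exact h2
  intro l
  induction l with
  | nil => intro x y; simp
  | cons j l ih =>
    intro x y
    simp only [List.map_cons, List.prod_cons, ContinuousLinearMap.mul_apply, ih, hpow]

end Aux

lemma aux_approx_eig' {d : ℕ} {K : Type*}
    [NormedAddCommGroup K] [InnerProductSpace ℂ K] [CompleteSpace K]
    (B : Fin d → (K →L[ℂ] K)) (hBcontr : ∀ j, ‖B j‖ ≤ 1)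
    (S : Subalgebra ℂ (K →L[ℂ] K)) (hS : IsClosed (S : Set (K →L[ℂ] K)))
    (hmem : ∀ j, B j ∈ S)
    (χ : S →ₐ[ℂ] ℂ)
    (hχ : ∀ j, χ ⟨B j, hmem j⟩ = 1)
    {ε : ℝ} (hε : 0 < ε) : ∃ y : K, ‖y‖ = 1 ∧ ∀ j, ‖B j y - y‖ ≤ ε := by
  haveI : CompleteSpace S := hS.completeSpace_coe
  haveI : Nontrivial K := by
    by_contra hn
    rw [not_nontrivial_iff_subsingleton] at hn
    haveI : Subsingleton (K →L[ℂ] K) := ⟨fun f g => by ext v; exact Subsingleton.elim _ _⟩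
    have h10 : (1 : S) = 0 := Subtype.ext (Subsingleton.elim _ _)
    have h1 := map_one χ
    rw [h10, map_zero] at h1
    exact one_ne_zero h1.symm
  haveI : NormOneClass S := ⟨by
    have h : ‖((1 : S) : K →L[ℂ] K)‖ = 1 := by
      rw [OneMemClass.coe_one]
      simp [ContinuousLinearMap.one_def]
    exact h⟩
  obtain ⟨v, hv⟩ := exists_ne (0 : K)
  by_cases hd : d = 0
  · subst hd
    refine ⟨‖v‖⁻¹ • v, ?_, fun j => j.elim0⟩
    rw [norm_smul, norm_inv, norm_norm, inv_mul_cancel₀ (norm_ne_zero_iff.2 hv)]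
  have hd0 : 0 < d := Nat.pos_of_ne_zero hd
  have hdR : (0 : ℝ) < d := by exact_mod_cast hd0
  have hdC : (d : ℂ) ≠ 0 := Nat.cast_ne_zero.2 hd
  have hsum_mem : (∑ j, B j) ∈ S := sum_mem fun j _ => hmem j
  set c : S := (d : ℂ)⁻¹ • (⟨∑ j, B j, hsum_mem⟩ : S) with hc
  have hcval : ((c : S) : K →L[ℂ] K) = (d : ℂ)⁻¹ • ∑ j, B j := rfl
  have hnormdinv : ‖(d : ℂ)⁻¹‖ = (d : ℝ)⁻¹ := by
    rw [norm_inv]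
    norm_num
  have hsumnorm : ‖∑ j, B j‖ ≤ (d : ℝ) := by
    calc ‖∑ j, B j‖ ≤ ∑ j, ‖B j‖ := norm_sum_le _ _
    _ ≤ ∑ _j : Fin d, (1 : ℝ) := Finset.sum_le_sum fun j _ => hBcontr j
    _ = (d : ℝ) := by simp
  have hcnorm : ‖c‖ ≤ 1 := by
    have h : ‖((c : S) : K →L[ℂ] K)‖ ≤ 1 := by
      rw [hcval, norm_smul, hnormdinv]
      calc (d : ℝ)⁻¹ * ‖∑ j, B j‖ ≤ (d : ℝ)⁻¹ * (d : ℝ) :=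
        mul_le_mul_of_nonneg_left hsumnorm (by positivity)
      _ = 1 := inv_mul_cancel₀ (ne_of_gt hdR)
    exact h
  have hχc : χ c = 1 := by
    have hsum_eq : (⟨∑ j, B j, hsum_mem⟩ : S) = ∑ j, (⟨B j, hmem j⟩ : S) := by
      apply Subtype.ext
      push_cast
      rfl
    rw [hc, hsum_eq, map_smul, map_sum]
    have h1 : ∀ j ∈ Finset.univ, χ (⟨B j, hmem j⟩ : S) = 1 := fun j _ => hχ j
    rw [Finset.sum_congr rfl h1]
    simp only [Finset.sum_const, Finset.card_univ, Fintype.card_fin, nsmul_eq_mul, mul_one,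
      smul_eq_mul]
    exact inv_mul_cancel₀ hdC
  -- choose δ
  set δ : ℝ := min 1 (ε ^ 2 / (6 * d)) with hδdef
  have hδpos : 0 < δ := lt_min one_pos (by positivity)
  have hδ1 : δ ≤ 1 := min_le_left _ _
  have hδ2 : δ ≤ ε ^ 2 / (6 * d) := min_le_right _ _
  have h1δ : (0 : ℝ) < 1 + δ := by linarith
  set r : ℝ := (1 + δ)⁻¹ with hr
  have hr0 : 0 < r := by positivity
  have hr1 : r < 1 := by
    rw [hr, inv_lt_one_iff₀]
    right; linarith
  set μ : ℂ := (r : ℂ) with hμ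
  have hμnorm : ‖μ • c‖ < 1 := by
    rw [norm_smul]
    have h : ‖μ‖ = r := by
      rw [hμ, Complex.norm_real, Real.norm_of_nonneg hr0.le]
    rw [h]
    calc r * ‖c‖ ≤ r * 1 := mul_le_mul_of_nonneg_left hcnorm hr0.le
    _ < 1 := by rw [mul_one]; exact hr1
  set u : Sˣ := Units.oneSub (μ • c) hμnorm with hu
  have huval : (u : S) = 1 - μ • c := rfl
  have hχu : χ (u : S) = 1 - μ := by
    rw [huval, map_sub, map_one, map_smul, hχc, smul_eq_mul, mul_one]
  have h1μreal : (1 : ℂ) - μ = ((δ / (1 + δ) : ℝ) : ℂ) := by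
    have hreal : 1 - (1 + δ)⁻¹ = δ / (1 + δ) := by
      field_simp
      ring
    calc (1 : ℂ) - μ = ((1 - r : ℝ) : ℂ) := by rw [hμ]; push_cast; ring
    _ = ((δ / (1 + δ) : ℝ) : ℂ) := by rw [hr, hreal]
  have h1μ : (1 : ℂ) - μ ≠ 0 := by
    rw [h1μreal]
    simp only [ne_eq, Complex.ofReal_eq_zero]
    positivity
  have hχuinv : χ ((↑u⁻¹ : S)) = (1 - μ)⁻¹ := by
    have h2 : χ (u : S) * χ ((↑u⁻¹ : S)) = 1 := by
      rw [← map_mul, u.mul_inv, map_one]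
    rw [hχu] at h2
    field_simp at h2 ⊢
    linear_combination h2
  have hnorm_uinv : 1 / δ ≤ ‖(↑u⁻¹ : S)‖ := by
    have h := AlgHom.norm_apply_le_self χ ((↑u⁻¹ : S))
    rw [hχuinv, h1μreal] at h
    have h2 : ‖(((δ / (1 + δ) : ℝ) : ℂ))⁻¹‖ = (1 + δ) / δ := by
      rw [norm_inv, Complex.norm_real, Real.norm_of_nonneg (by positivity), inv_div]
    rw [h2] at h
    have h3 : 1 / δ ≤ (1 + δ) / δ := by
      gcongr
      linarith
    linarith
  -- find an approximate eigenvector for the average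
  set R : K →L[ℂ] K := ((↑u⁻¹ : S) : K →L[ℂ] K) with hRdef
  have hRnorm : 1 / δ ≤ ‖R‖ := hnorm_uinv
  have hhalf : 1 / (2 * δ) < ‖R‖ := by
    have h : 1 / (2 * δ) < 1 / δ := one_div_lt_one_div_of_lt hδpos (by linarith)
    linarith
  have hcon : ¬ (∀ w : K, ‖R w‖ ≤ (1 / (2 * δ)) * ‖w‖) := by
    intro hcon
    exact absurd (ContinuousLinearMap.opNorm_le_bound R (by positivity) hcon) (not_le.2 hhalf)
  push_neg at hcon
  obtain ⟨w, hw⟩ := hcon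
  set y0 : K := R w with hy0def
  have hy00 : y0 ≠ 0 := by
    intro h0
    have h1 : (0 : ℝ) ≤ (1 / (2 * δ)) * ‖w‖ := by positivity
    rw [h0] at hw
    simp only [norm_zero] at hw
    linarith
  set y : K := ‖y0‖⁻¹ • y0 with hydef
  have hynorm : ‖y‖ = 1 := by
    rw [hydef, norm_smul, norm_inv, norm_norm, inv_mul_cancel₀ (norm_ne_zero_iff.2 hy00)]
  have hwy0 : ‖w‖ ≤ 2 * δ * ‖y0‖ := by
    have h1 : (1 / (2 * δ)) * ‖w‖ ≤ ‖y0‖ := hw.le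
    calc ‖w‖ = 2 * δ * ((1 / (2 * δ)) * ‖w‖) := by field_simp
    _ ≤ 2 * δ * ‖y0‖ := mul_le_mul_of_nonneg_left h1 (by positivity)
  have hcomp : ((u : S) : K →L[ℂ] K) y0 = w := by
    have h1 : ((u : S) * (↑u⁻¹ : S)) = (1 : S) := u.mul_inv
    have h2 : ((u : S) : K →L[ℂ] K) * R = 1 :=
      congrArg Subtype.val h1
    calc ((u : S) : K →L[ℂ] K) y0 = (((u : S) : K →L[ℂ] K) * R) w := rfl
    _ = w := by rw [h2]; rfl
  have huvnorm : ‖((u : S) : K →L[ℂ] K) y‖ ≤ 2 * δ := by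
    rw [hydef, ContinuousLinearMap.map_smul_of_tower, hcomp, norm_smul, norm_inv, norm_norm]
    rw [inv_mul_le_iff₀ (norm_pos_iff.2 hy00)]
    linarith [hwy0]
  set Cop : K →L[ℂ] K := ((c : S) : K →L[ℂ] K) with hCopdef
  have hCopnorm : ‖Cop‖ ≤ 1 := hcnorm
  have huval2 : ((u : S) : K →L[ℂ] K) = 1 - μ • Cop := by
    rw [huval]
    push_cast
    rfl
  have hyC : ‖y - Cop y‖ ≤ 3 * δ := by
    have hid : y - Cop y = ((u : S) : K →L[ℂ] K) y + ((μ - 1) • Cop y) := by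
      rw [huval2]
      simp only [ContinuousLinearMap.sub_apply, ContinuousLinearMap.one_apply,
        ContinuousLinearMap.smul_apply, sub_smul, one_smul]
      abel
    rw [hid]
    have h2 : ‖(μ - 1) • Cop y‖ ≤ δ := by
      rw [norm_smul]
      have h3 : ‖μ - 1‖ = δ / (1 + δ) := by
        rw [← norm_neg, neg_sub, h1μreal, Complex.norm_real,
          Real.norm_of_nonneg (by positivity)]
      rw [h3]
      have h4 : ‖Cop y‖ ≤ 1 := by
        calc ‖Cop y‖ ≤ ‖Cop‖ * ‖y‖ := ContinuousLinearMap.le_opNorm _ _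
        _ ≤ 1 := by rw [hynorm, mul_one]; exact hCopnorm
      have h5 : δ / (1 + δ) ≤ δ := div_le_self hδpos.le (by linarith)
      calc δ / (1 + δ) * ‖Cop y‖ ≤ δ / (1 + δ) * 1 :=
        mul_le_mul_of_nonneg_left h4 (by positivity)
      _ ≤ δ := by rw [mul_one]; exact h5
    calc ‖((u : S) : K →L[ℂ] K) y + (μ - 1) • Cop y‖
        ≤ ‖((u : S) : K →L[ℂ] K) y‖ + ‖(μ - 1) • Cop y‖ := norm_add_le _ _
    _ ≤ 2 * δ + δ := add_le_add huvnorm h2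
    _ = 3 * δ := by ring
  -- inner product estimates
  have hself : (inner ℂ y y : ℂ).re = 1 := by
    rw [inner_self_eq_norm_sq_to_K, hynorm]
    norm_num
  have hBy_le : ∀ j, ‖B j y‖ ≤ 1 := by
    intro j
    calc ‖B j y‖ ≤ ‖B j‖ * ‖y‖ := ContinuousLinearMap.le_opNorm _ _
    _ ≤ 1 := by rw [hynorm, mul_one]; exact hBcontr j
  have hre_le : ∀ j, (inner ℂ (B j y) y : ℂ).re ≤ 1 := by
    intro j
    have hstep : (inner ℂ (B j y) y : ℂ).re ≤ ‖(inner ℂ (B j y) y : ℂ)‖ := by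
      exact Complex.re_le_norm _
    calc (inner ℂ (B j y) y : ℂ).re ≤ ‖(inner ℂ (B j y) y : ℂ)‖ := hstep
    _ ≤ ‖B j y‖ * ‖y‖ := norm_inner_le_norm _ _
    _ ≤ 1 := by rw [hynorm, mul_one]; exact hBy_le j
  have hsplit_inner : ∀ j, (inner ℂ (y - B j y) y : ℂ).re = 1 - (inner ℂ (B j y) y : ℂ).re := by
    intro j
    rw [inner_sub_left]
    rw [Complex.sub_re, hself]
  have hf_nonneg : ∀ j, 0 ≤ (inner ℂ (y - B j y) y : ℂ).re := by
    intro j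
    rw [hsplit_inner j]
    linarith [hre_le j]
  have hvec : ∑ j, (y - B j y) = (d : ℂ) • (y - Cop y) := by
    have hCy : (d : ℂ) • Cop y = ∑ j, B j y := by
      rw [hcval]
      rw [ContinuousLinearMap.smul_apply, smul_smul, mul_inv_cancel₀ hdC, one_smul,
        ContinuousLinearMap.sum_apply]
    rw [Finset.sum_sub_distrib, smul_sub, hCy, Finset.sum_const, Finset.card_univ,
      Fintype.card_fin, Nat.cast_smul_eq_nsmul]
  have hsum_f : ∑ j, (inner ℂ (y - B j y) y : ℂ).re = d * (inner ℂ (y - Cop y) y : ℂ).re := by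
    have h1 : (inner ℂ (∑ j, (y - B j y)) y : ℂ) = (d : ℂ) * (inner ℂ (y - Cop y) y : ℂ) := by
      rw [hvec, inner_smul_left]
      rw [map_natCast]
    have h2 : (inner ℂ (∑ j, (y - B j y)) y : ℂ) = ∑ j, (inner ℂ (y - B j y) y : ℂ) :=
      sum_inner _ _ _
    rw [h2] at h1
    have h3 := congrArg Complex.re h1
    rw [Complex.re_sum] at h3
    rw [h3]
    simp [Complex.ofReal_mul]
  have hCre : (inner ℂ (y - Cop y) y : ℂ).re ≤ 3 * δ := by
    have hstep : (inner ℂ (y - Cop y) y : ℂ).re ≤ ‖(inner ℂ (y - Cop y) y : ℂ)‖ := by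
      exact Complex.re_le_norm _
    calc (inner ℂ (y - Cop y) y : ℂ).re ≤ ‖(inner ℂ (y - Cop y) y : ℂ)‖ := hstep
    _ ≤ ‖y - Cop y‖ * ‖y‖ := norm_inner_le_norm _ _
    _ ≤ 3 * δ := by rw [hynorm, mul_one]; exact hyC
  have hkey : ∀ j, (inner ℂ (y - B j y) y : ℂ).re ≤ 3 * d * δ := by
    intro j
    have h1 : (inner ℂ (y - B j y) y : ℂ).re ≤ ∑ j', (inner ℂ (y - B j' y) y : ℂ).re :=
      Finset.single_le_sum (fun j' _ => hf_nonneg j') (Finset.mem_univ j)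
    rw [hsum_f] at h1
    calc (inner ℂ (y - B j y) y : ℂ).re ≤ d * (inner ℂ (y - Cop y) y : ℂ).re := h1
    _ ≤ d * (3 * δ) := mul_le_mul_of_nonneg_left hCre (by positivity)
    _ = 3 * d * δ := by ring
  refine ⟨y, hynorm, fun j => ?_⟩
  have hnormsq : ‖B j y - y‖ ^ 2 ≤ 2 * (inner ℂ (y - B j y) y : ℂ).re := by
    have hns := @norm_sub_sq ℂ K _ _ _ (B j y) y
    have hns' : ‖B j y - y‖ ^ 2 = ‖B j y‖ ^ 2 - 2 * (inner ℂ (B j y) y : ℂ).re + 1 := by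
      rw [hns, hynorm]
      norm_num
    rw [hns', hsplit_inner j]
    nlinarith [hBy_le j, norm_nonneg (B j y)]
  have hsq : ‖B j y - y‖ ^ 2 ≤ ε ^ 2 := by
    have h1 := hkey j
    have h2 : 6 * (d : ℝ) * δ ≤ ε ^ 2 := by
      rw [le_div_iff₀ (by positivity : (0:ℝ) < 6 * d)] at hδ2
      nlinarith [hδ2]
    nlinarith
  nlinarith [norm_nonneg (B j y - y), hε, sq_nonneg (‖B j y - y‖ - ε)]

/-- Let `A`, `B` be commuting `d`-tuples of contractions on Hilbert spaces
`H`, `K`. Suppose there is a unital multiplicative linear functional `χ` on the unital Banach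
algebra generated by `B_1, …, B_d` with `χ(B_j) = 1` for all `j`. If the tuple
`A ⊗ B = (A_1 ⊗ B_1, …, A_d ⊗ B_d)` on the Hilbert space tensor product `H ⊗ K` (axiomatized
here by a bilinear map `t` with `⟪t x y, t x' y'⟫ = ⟪x,x'⟫⟪y,y'⟫`, total elementary tensors,
and `(A_j ⊗ B_j)(t x y) = t (A_j x) (B_j y)`) satisfies von Neumann's inequality, then so
does `A`. -/
theorem vN_of_tensor_vN {d : ℕ} {H K E : Type*}
    [NormedAddCommGroup H] [InnerProductSpace ℂ H] [CompleteSpace H]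
    [NormedAddCommGroup K] [InnerProductSpace ℂ K] [CompleteSpace K]
    [NormedAddCommGroup E] [InnerProductSpace ℂ E] [CompleteSpace E]
    (A : Fin d → (H →L[ℂ] H)) (B : Fin d → (K →L[ℂ] K))
    (hAcomm : ∀ i j, Commute (A i) (A j)) (hBcomm : ∀ i j, Commute (B i) (B j))
    (hAcontr : ∀ j, ‖A j‖ ≤ 1) (hBcontr : ∀ j, ‖B j‖ ≤ 1)
    (χ : ((Algebra.adjoin ℂ (Set.range B)).topologicalClosure) →ₐ[ℂ] ℂ)
    (hχ : ∀ j (hj : B j ∈ (Algebra.adjoin ℂ (Set.range B)).topologicalClosure),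
      χ ⟨B j, hj⟩ = 1)
    (t : H →ₗ[ℂ] K →ₗ[ℂ] E)
    (ht_inner : ∀ (x x' : H) (y y' : K),
      (inner ℂ (t x y) (t x' y') : ℂ) = (inner ℂ x x' : ℂ) * (inner ℂ y y' : ℂ))
    (ht_dense : (Submodule.span ℂ {e : E | ∃ x y, e = t x y}).topologicalClosure = ⊤)
    (AB : Fin d → (E →L[ℂ] E))
    (hAB : ∀ j x y, AB j (t x y) = t (A j x) (B j y))
    (hABvN : ∀ p : MvPolynomial (Fin d) ℂ, ‖polyEval AB p‖ ≤ polySup p) :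
    ∀ p : MvPolynomial (Fin d) ℂ, ‖polyEval A p‖ ≤ polySup p := by
  intro p
  have hsup0 : 0 ≤ polySup p := Real.iSup_nonneg fun z => norm_nonneg _
  refine ContinuousLinearMap.opNorm_le_bound _ hsup0 fun x => ?_
  refine le_of_forall_pos_le_add fun ε hε => ?_
  set M : ℝ := ∑ α ∈ p.support, ‖MvPolynomial.coeff α p‖ * ((∑ j, (α j : ℝ)) * ‖x‖) with hM
  have hM0 : 0 ≤ M := by
    apply Finset.sum_nonneg
    intro α _
    positivity
  set ε' : ℝ := ε / (M + 1) with hε'def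
  have hε' : 0 < ε' := by positivity
  obtain ⟨y, hy1, hyB⟩ := aux_approx_eig' B hBcontr
    ((Algebra.adjoin ℂ (Set.range B)).topologicalClosure)
    (Subalgebra.isClosed_topologicalClosure _)
    (fun j => (Algebra.adjoin ℂ (Set.range B)).le_topologicalClosure
      (Algebra.subset_adjoin ⟨j, rfl⟩))
    χ (fun j => hχ j _) hε'
  have hT : ∀ (v : H) (w : K), ‖t v w‖ = ‖v‖ * ‖w‖ := aux_t_norm t ht_inner
  have hPAB : polyEval AB p (t x y)
      = ∑ α ∈ p.support, MvPolynomial.coeff α p • t (tuplePow A α x) (tuplePow B α y) := by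
    rw [polyEval, Finsupp.sum]
    rw [ContinuousLinearMap.sum_apply]
    refine Finset.sum_congr rfl fun α _ => ?_
    rw [ContinuousLinearMap.smul_apply, aux_tuplePow_tensor A B AB t hAB]
    rfl
  have hPA : t (polyEval A p x) y
      = ∑ α ∈ p.support, MvPolynomial.coeff α p • t (tuplePow A α x) y := by
    rw [polyEval, Finsupp.sum, ContinuousLinearMap.sum_apply, map_sum,
      LinearMap.sum_apply]
    refine Finset.sum_congr rfl fun α _ => ?_
    rw [ContinuousLinearMap.smul_apply, map_smul, LinearMap.smul_apply]
    rfl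
  have hdiff : ‖polyEval AB p (t x y) - t (polyEval A p x) y‖ ≤ M * ε' := by
    rw [hPAB, hPA, ← Finset.sum_sub_distrib]
    calc ‖∑ α ∈ p.support, (MvPolynomial.coeff α p • t (tuplePow A α x) (tuplePow B α y)
            - MvPolynomial.coeff α p • t (tuplePow A α x) y)‖
        ≤ ∑ α ∈ p.support, ‖MvPolynomial.coeff α p • t (tuplePow A α x) (tuplePow B α y)
            - MvPolynomial.coeff α p • t (tuplePow A α x) y‖ := norm_sum_le _ _
    _ ≤ ∑ α ∈ p.support, ‖MvPolynomial.coeff α p‖ * ((∑ j, (α j : ℝ)) * ‖x‖) * ε' := by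
        refine Finset.sum_le_sum fun α _ => ?_
        rw [← smul_sub, ← map_sub, norm_smul]
        have h1 : ‖tuplePow A α x‖ ≤ ‖x‖ := by
          calc ‖tuplePow A α x‖ ≤ ‖tuplePow A α‖ * ‖x‖ := ContinuousLinearMap.le_opNorm _ _
          _ ≤ 1 * ‖x‖ := by
            apply mul_le_mul_of_nonneg_right (aux_tuplePow_norm_le A hAcontr α) (norm_nonneg _)
          _ = ‖x‖ := one_mul _
        have h2 : ‖tuplePow B α y - y‖ ≤ (∑ j, (α j : ℝ)) * ε' :=
          aux_tuplePow_approx B hBcontr y hε'.le hyB α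
        rw [hT]
        have hs0 : 0 ≤ (∑ j, (α j : ℝ)) := Finset.sum_nonneg fun j _ => Nat.cast_nonneg _
        calc ‖MvPolynomial.coeff α p‖ * (‖tuplePow A α x‖ * ‖tuplePow B α y - y‖)
            ≤ ‖MvPolynomial.coeff α p‖ * (‖x‖ * ((∑ j, (α j : ℝ)) * ε')) := by
              apply mul_le_mul_of_nonneg_left _ (norm_nonneg _)
              apply mul_le_mul h1 h2 (norm_nonneg _) (norm_nonneg _)
        _ = ‖MvPolynomial.coeff α p‖ * ((∑ j, (α j : ℝ)) * ‖x‖) * ε' := by ring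
    _ = M * ε' := by rw [hM, Finset.sum_mul]
  have hup : ‖polyEval AB p (t x y)‖ ≤ polySup p * ‖x‖ := by
    calc ‖polyEval AB p (t x y)‖ ≤ ‖polyEval AB p‖ * ‖t x y‖ :=
      ContinuousLinearMap.le_opNorm _ _
    _ = ‖polyEval AB p‖ * ‖x‖ := by rw [hT, hy1, mul_one]
    _ ≤ polySup p * ‖x‖ := mul_le_mul_of_nonneg_right (hABvN p) (norm_nonneg x)
  have hkey : ‖polyEval A p x‖ = ‖t (polyEval A p x) y‖ := by rw [hT, hy1, mul_one]
  have hMε : M * ε' ≤ ε := by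
    rw [hε'def]
    have h1 : M / (M + 1) ≤ 1 := by
      rw [div_le_one (by linarith)]
      linarith
    calc M * (ε / (M + 1)) = (M / (M + 1)) * ε := by ring
    _ ≤ 1 * ε := mul_le_mul_of_nonneg_right h1 hε.le
    _ = ε := one_mul _
  calc ‖polyEval A p x‖ = ‖t (polyEval A p x) y‖ := hkey
  _ = ‖polyEval AB p (t x y) - (polyEval AB p (t x y) - t (polyEval A p x) y)‖ := by
      congr 1; abel
  _ ≤ ‖polyEval AB p (t x y)‖ + ‖polyEval AB p (t x y) - t (polyEval A p x) y‖ :=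
      norm_sub_le _ _
  _ ≤ polySup p * ‖x‖ + M * ε' := add_le_add hup hdiff
  _ ≤ polySup p * ‖x‖ + ε := by linarith
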